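/- Let G = (V, E) be an n-vertex graph. Define the degree of an edge e = {u,v} as min(deg(u), deg(v)), and for d ≥ 1 define the d-projection of a cut S ⊆ V as the set of edges crossing (S, V∖S) whose degree is at least d. Then for every integers d, α ≥ 1, the number of distinct d-projections arising from cuts S with Vol(S) ≤ α·d is at most n^α. -/
import Mathlib


open Finset

/-- The `d`-projection of a cut `S`: all edges of `G` crossing `(S, V ∖ S)` whose
degree `min (deg u) (deg v)` is at least `d`. -/
def dProjection {V : Type*} [Fintype V] [DecidableEq V] (G : SimpleGraph V)
    [DecidableRel G.Adj] (d : ℕ) (S : Finset V) : Finset (Sym2 V) :=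
  G.edgeFinset.filter (fun e =>
    (∃ u ∈ S, ∃ v ∈ Sᶜ, e = s(u, v)) ∧
    ∃ u v, e = s(u, v) ∧ d ≤ min (G.degree u) (G.degree v))

lemma dProj_inter {V : Type*} [Fintype V] [DecidableEq V] (G : SimpleGraph V)
    [DecidableRel G.Adj] (d : ℕ) (S : Finset V) :
    dProjection G d S
      = dProjection G d (S ∩ (Finset.univ.filter fun v => d ≤ G.degree v)) := by
  ext e
  simp only [dProjection, mem_filter, mem_inter, mem_compl, mem_univ, true_and]
  constructor
  · rintro ⟨he, ⟨u, hu, v, hv, rfl⟩, w, x, hwx, hmin⟩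
    have h2 : d ≤ G.degree u ∧ d ≤ G.degree v := by
      rw [Sym2.eq_iff] at hwx
      rcases hwx with ⟨rfl, rfl⟩ | ⟨rfl, rfl⟩ <;> simp only [le_min_iff] at hmin <;> tauto
    refine ⟨he, ⟨u, ⟨hu, h2.1⟩, v, ?_, rfl⟩, u, v, rfl, le_min h2.1 h2.2⟩
    simp [hv]
  · rintro ⟨he, ⟨u, hu, v, hv, rfl⟩, w, x, hwx, hmin⟩
    have h2 : d ≤ G.degree u ∧ d ≤ G.degree v := by
      rw [Sym2.eq_iff] at hwx
      rcases hwx with ⟨rfl, rfl⟩ | ⟨rfl, rfl⟩ <;> simp only [le_min_iff] at hmin <;> tauto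
    refine ⟨he, ⟨u, hu.1, v, ?_, rfl⟩, u, v, rfl, le_min h2.1 h2.2⟩
    intro hvS
    exact hv ⟨hvS, h2.2⟩

/-- The number of distinct `d`-projections arising from cuts `S` (nonempty proper
vertex sets) of volume at most `α · d` is at most `n ^ α`. -/
theorem stmt_5 {V : Type*} [Fintype V] [DecidableEq V] (G : SimpleGraph V)
    [DecidableRel G.Adj] (d α : ℕ) (hd : 1 ≤ d) (hα : 1 ≤ α) :
    (((Finset.univ : Finset (Finset V)).filter
        (fun S => S.Nonempty ∧ S ≠ Finset.univ ∧ ∑ v ∈ S, G.degree v ≤ α * d)).image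
      (fun S => dProjection G d S)).card ≤ Fintype.card V ^ α := by
  classical
  rcases isEmpty_or_nonempty V with hV | hV
  · have : ¬ ∃ S : Finset V, S.Nonempty := by
      rintro ⟨S, x, -⟩; exact hV.elim x
    have h0 : ((Finset.univ : Finset (Finset V)).filter
        (fun S => S.Nonempty ∧ S ≠ Finset.univ ∧ ∑ v ∈ S, G.degree v ≤ α * d)) = ∅ := by
      apply Finset.filter_false_of_mem
      intro S _ hS
      exact this ⟨S, hS.1⟩
    rw [h0]
    simp only [Finset.image_empty, Finset.card_empty]
    exact Nat.zero_le _
  set Vd : Finset V := Finset.univ.filter (fun v => d ≤ G.degree v) with hVdDef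
  set 𝒮 := (Finset.univ : Finset (Finset V)).filter
      (fun S => S.Nonempty ∧ S ≠ Finset.univ ∧ ∑ v ∈ S, G.degree v ≤ α * d) with h𝒮
  have himg : 𝒮.image (fun S => dProjection G d S)
      = (𝒮.image (fun S => S ∩ Vd)).image (fun T => dProjection G d T) := by
    rw [Finset.image_image]
    exact (Finset.image_congr (fun S _ => dProj_inter G d S))
  rw [himg]
  refine le_trans Finset.card_image_le ?_
  set 𝒯 := 𝒮.image (fun S => S ∩ Vd) with h𝒯
  -- properties of elements of 𝒯
  have hT : ∀ T ∈ 𝒯, T ⊆ Vd ∧ T.card ≤ α ∧ (T = ∅ → ∃ x, x ∉ Vd) := by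
    intro T hTmem
    rw [h𝒯, Finset.mem_image] at hTmem
    obtain ⟨S, hS, rfl⟩ := hTmem
    rw [h𝒮, Finset.mem_filter] at hS
    obtain ⟨-, hSne, -, hvol⟩ := hS
    refine ⟨Finset.inter_subset_right, ?_, ?_⟩
    · have h1 : (S ∩ Vd).card * d ≤ ∑ v ∈ S ∩ Vd, G.degree v := by
        have := Finset.card_nsmul_le_sum (S ∩ Vd) (fun v => G.degree v) d
          (fun v hv => by simpa [hVdDef] using (Finset.mem_inter.mp hv).2)
        simpa [smul_eq_mul] using this
      have h2 : ∑ v ∈ S ∩ Vd, G.degree v ≤ ∑ v ∈ S, G.degree v :=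
        Finset.sum_le_sum_of_subset Finset.inter_subset_left
      have h3 : (S ∩ Vd).card * d ≤ α * d := le_trans h1 (le_trans h2 hvol)
      exact Nat.le_of_mul_le_mul_right (by simpa [mul_comm] using h3) hd
    · intro hempty
      obtain ⟨s, hs⟩ := hSne
      refine ⟨s, fun hsVd => ?_⟩
      have : s ∈ S ∩ Vd := Finset.mem_inter.mpr ⟨hs, hsVd⟩
      simp [hempty] at this
  -- the encoding
  let w : V := if h : ∃ x, x ∉ Vd then h.choose else Classical.arbitrary V
  let enc : Finset V → (Fin α → V) := fun T i =>
    if h : T.Nonempty then T.toList.getD i h.choose else w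
  have hmemenc : ∀ (T : Finset V) (h : T.Nonempty) (i : Fin α), enc T i ∈ T := by
    intro T h i
    simp only [enc, dif_pos h]
    by_cases hi : (i : ℕ) < T.toList.length
    · rw [List.getD_eq_getElem _ _ hi]
      exact Finset.mem_toList.mp (List.getElem_mem hi)
    · rw [List.getD_eq_default _ _ (le_of_not_gt hi)]
      exact h.choose_spec
  have hsurj : ∀ T : Finset V, T.card ≤ α → ∀ t ∈ T, ∃ i : Fin α, enc T i = t := by
    intro T hcard t ht
    have hne : T.Nonempty := ⟨t, ht⟩
    have htl : t ∈ T.toList := Finset.mem_toList.mpr ht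
    obtain ⟨⟨j, hj⟩, hget⟩ := List.mem_iff_get.mp htl
    have hj' : j < α := lt_of_lt_of_le (by simpa [Finset.length_toList] using hj) hcard
    refine ⟨⟨j, hj'⟩, ?_⟩
    simp only [enc, dif_pos hne]
    rw [List.getD_eq_getElem _ _ (by simpa using hj)]
    simpa [List.get_eq_getElem] using hget
  have hinj : Set.InjOn enc 𝒯 := by
    intro T1 hT1 T2 hT2 heq
    obtain ⟨hsub1, hcard1, hemp1⟩ := hT (T1) hT1
    obtain ⟨hsub2, hcard2, hemp2⟩ := hT (T2) hT2
    by_cases hne1 : T1.Nonempty <;> by_cases hne2 : T2.Nonempty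
    · apply Finset.Subset.antisymm
      · intro t ht
        obtain ⟨i, hi⟩ := hsurj T1 hcard1 t ht
        rw [heq] at hi
        exact hi ▸ hmemenc T2 hne2 i
      · intro t ht
        obtain ⟨i, hi⟩ := hsurj T2 hcard2 t ht
        rw [← heq] at hi
        exact hi ▸ hmemenc T1 hne1 i
    · exfalso
      have hT2e : T2 = ∅ := Finset.not_nonempty_iff_eq_empty.mp hne2
      have hex : ∃ x, x ∉ Vd := hemp2 hT2e
      have hw : w ∉ Vd := by simp only [w, dif_pos hex]; exact hex.choose_spec
      have i0 : Fin α := ⟨0, hα⟩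
      have h1 : enc T1 i0 ∈ T1 := hmemenc T1 hne1 i0
      have h2 : enc T2 i0 = w := by simp [enc, hne2]
      rw [heq, h2] at h1
      exact hw (hsub1 h1)
    · exfalso
      have hT1e : T1 = ∅ := Finset.not_nonempty_iff_eq_empty.mp hne1
      have hex : ∃ x, x ∉ Vd := hemp1 hT1e
      have hw : w ∉ Vd := by simp only [w, dif_pos hex]; exact hex.choose_spec
      have i0 : Fin α := ⟨0, hα⟩
      have h1 : enc T2 i0 ∈ T2 := hmemenc T2 hne2 i0
      have h2 : enc T1 i0 = w := by simp [enc, hne1]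
      rw [← heq, h2] at h1
      exact hw (hsub2 h1)
    · rw [Finset.not_nonempty_iff_eq_empty.mp hne1,
        Finset.not_nonempty_iff_eq_empty.mp hne2]
  calc 𝒯.card ≤ (Finset.univ : Finset (Fin α → V)).card :=
        Finset.card_le_card_of_injOn enc (fun _ _ => Finset.mem_univ _) (by
          intro a ha b hb hab
          exact hinj (by exact_mod_cast ha) (by exact_mod_cast hb) hab)
    _ = Fintype.card V ^ α := by
        rw [Finset.card_univ, Fintype.card_fun]
        simp
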